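/- For every λ > 1/2, n ∈ ℕ₀ and x ∈ (−1,1), d/dx{(1+x)^{λ+1}(1−x)^λ C_n^{λ+1/2}(x)} = (1+x)(1−x²)^{λ−1} Q_{n+1}(x), where Q_{n+1}(x) = (1−x) C_n^{λ+1/2}(x) − (n+1)((2λ+n)/(2λ−1)) C_{n+1}^{λ−1/2}(x). -/

import Mathlib

open Real MeasureTheory Finset intervalIntegral

noncomputable section

/-- The Gegenbauer (ultraspherical) polynomial `C_n^λ`. -/
def Gegenbauer (lam : ℝ) (n : ℕ) (x : ℝ) : ℝ :=
  ∑ k ∈ Finset.range (n / 2 + 1),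
    ((-1 : ℝ) ^ k * Real.Gamma ((n : ℝ) - (k : ℝ) + lam) /
      (Real.Gamma lam * (Nat.factorial k : ℝ) * (Nat.factorial (n - 2 * k) : ℝ))) *
      (2 * x) ^ (n - 2 * k)

/-- The terminating hypergeometric polynomial `₂F₁(−m, b; c; z)`. -/
def hyp2F1 (m : ℕ) (b c z : ℝ) : ℝ :=
  ∑ k ∈ Finset.range (m + 1),
    ((ascPochhammer ℝ k).eval (-(m : ℝ)) * (ascPochhammer ℝ k).eval b) /
      ((ascPochhammer ℝ k).eval c * (Nat.factorial k : ℝ)) * z ^ k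

/-- The half-step fractional integral `I^λ_+`. -/
def Iplus (lam : ℝ) (f : ℝ → ℝ) (x : ℝ) : ℝ :=
  (1 + x) ^ (-lam + 1 / 2) *
    ∫ τ in (-1 : ℝ)..x, (x - τ) ^ (-(1 / 2) : ℝ) * (1 + τ) ^ lam * f τ

/-- The half-step fractional integral `I^λ_−`. -/
def Iminus (lam : ℝ) (f : ℝ → ℝ) (x : ℝ) : ℝ :=
  (1 - x) ^ (-lam + 1 / 2) *
    ∫ τ in x..(1 : ℝ), (τ - x) ^ (-(1 / 2) : ℝ) * (1 - τ) ^ lam * f τ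

/-- `𝓘^λ_+ = I^λ_+ + I^λ_−`. -/
def calIplus (lam : ℝ) (f : ℝ → ℝ) (x : ℝ) : ℝ := Iplus lam f x + Iminus lam f x

/-- `𝓘^λ_− = I^λ_+ − I^λ_−`. -/
def calIminus (lam : ℝ) (f : ℝ → ℝ) (x : ℝ) : ℝ := Iplus lam f x - Iminus lam f x

/-- The half-step fractional derivative `D^λ_+`. -/
def Dplus (lam : ℝ) (f : ℝ → ℝ) (x : ℝ) : ℝ :=
  (1 + x) *
    deriv (fun y : ℝ => (1 + y) ^ (-lam) *
      ∫ τ in (-1 : ℝ)..y, (y - τ) ^ (-(1 / 2) : ℝ) * (1 + τ) ^ (lam - 1 / 2) * f τ) x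

/-- The half-step fractional derivative `D^λ_−`. -/
def Dminus (lam : ℝ) (f : ℝ → ℝ) (x : ℝ) : ℝ :=
  (1 - x) *
    deriv (fun y : ℝ => (1 - y) ^ (-lam) *
      ∫ τ in y..(1 : ℝ), (τ - y) ^ (-(1 / 2) : ℝ) * (1 - τ) ^ (lam - 1 / 2) * f τ) x

/-- `𝓓^λ_+ = D^λ_+ + D^λ_−`. -/
def calDplus (lam : ℝ) (f : ℝ → ℝ) (x : ℝ) : ℝ := Dplus lam f x + Dminus lam f x

/-- `𝓓^λ_− = D^λ_+ − D^λ_−`. -/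
def calDminus (lam : ℝ) (f : ℝ → ℝ) (x : ℝ) : ℝ := Dplus lam f x - Dminus lam f x

/-- Normalization constant `h_n^λ` for the Gegenbauer system. -/
def hGeg (lam : ℝ) (n : ℕ) : ℝ :=
  Real.pi * Real.Gamma (2 * lam + n) /
    ((2 : ℝ) ^ (2 * lam - 1) * (Nat.factorial n : ℝ) * (lam + n) * (Real.Gamma lam) ^ 2)

/-- The `n`-th Gegenbauer coefficient (parameter `λ`) of `g`. -/
def gegCoeff (lam : ℝ) (g : ℝ → ℝ) (n : ℕ) : ℝ :=
  (1 / hGeg lam n) *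
    ∫ t in (-1 : ℝ)..1, g t * Gegenbauer lam n t * (1 - t ^ 2) ^ (lam - 1 / 2)

/-- The Chebyshev polynomial of the first kind, as a real function. -/
def chebT (n : ℕ) (x : ℝ) : ℝ := (Polynomial.Chebyshev.T ℝ (n : ℤ)).eval x

/-- The `n`-th Chebyshev coefficient of `f`. -/
def chebCoeff (f : ℝ → ℝ) (n : ℕ) : ℝ :=
  if n = 0 then
    (1 / Real.pi) * ∫ t in (-1 : ℝ)..1, f t * (1 - t ^ 2) ^ (-(1 / 2) : ℝ)
  else
    (2 / Real.pi) * ∫ t in (-1 : ℝ)..1, f t * chebT n t * (1 - t ^ 2) ^ (-(1 / 2) : ℝ)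

/-- The Legendre polynomial `P_n = C_n^{1/2}`. -/
def legendreP (n : ℕ) (x : ℝ) : ℝ := Gegenbauer (1 / 2) n x

/-- The `n`-th Legendre coefficient of `g`. -/
def legCoeff (g : ℝ → ℝ) (n : ℕ) : ℝ :=
  ((2 * (n : ℝ) + 1) / 2) * ∫ x in (-1 : ℝ)..1, g x * legendreP n x

/-- `f` is (zonal) positive definite on the sphere `S^m ⊂ ℝ^{m+1}`. -/
def PosDefSphere (m : ℕ) (f : ℝ → ℝ) : Prop :=
  ∀ (n : ℕ) (x : Fin n → EuclideanSpace ℝ (Fin (m + 1))),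
    (∀ i, ‖x i‖ = 1) → Function.Injective x →
      ∀ c : Fin n → ℝ,
        0 ≤ ∑ i : Fin n, ∑ j : Fin n, c i * c j * f (inner ℝ (x i) (x j) : ℝ)

/-- `f` is (zonal) strictly positive definite on the sphere `S^m ⊂ ℝ^{m+1}`. -/
def StrictPosDefSphere (m : ℕ) (f : ℝ → ℝ) : Prop :=
  ∀ (n : ℕ) (x : Fin n → EuclideanSpace ℝ (Fin (m + 1))),
    (∀ i, ‖x i‖ = 1) → Function.Injective x →
      ∀ c : Fin n → ℝ, c ≠ 0 →
        0 < ∑ i : Fin n, ∑ j : Fin n, c i * c j * f (inner ℝ (x i) (x j) : ℝ)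

/-- `f ∈ Λ_m`: continuous on `[−1,1]` and positive definite on `S^m`. -/
def MemLambda (m : ℕ) (f : ℝ → ℝ) : Prop :=
  ContinuousOn f (Set.Icc (-1 : ℝ) 1) ∧ PosDefSphere m f

/-- `f ∈ Λ^+_m`: continuous on `[−1,1]` and strictly positive definite on `S^m`. -/
def MemLambdaPlus (m : ℕ) (f : ℝ → ℝ) : Prop :=
  ContinuousOn f (Set.Icc (-1 : ℝ) 1) ∧ StrictPosDefSphere m f

end

noncomputable section Stmt8Aux

private def gcoef (lam : ℝ) (n k : ℕ) : ℝ :=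
  (-1 : ℝ) ^ k * Real.Gamma ((n : ℝ) - (k : ℝ) + lam) /
    (Real.Gamma lam * (Nat.factorial k : ℝ) * (Nat.factorial (n - 2 * k) : ℝ))

private theorem Gegenbauer_eq (lam : ℝ) (n : ℕ) (x : ℝ) :
    Gegenbauer lam n x
      = ∑ k ∈ Finset.range (n / 2 + 1), gcoef lam n k * (2 * x) ^ (n - 2 * k) := rfl

private def gderiv (lam : ℝ) (n : ℕ) (x : ℝ) : ℝ :=
  ∑ k ∈ Finset.range (n / 2 + 1),
    gcoef lam n k * (((n - 2 * k : ℕ) : ℝ) * (2 * x) ^ (n - 2 * k - 1) * 2)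

private theorem hasDerivAt_geg (lam : ℝ) (n : ℕ) (x : ℝ) :
    HasDerivAt (fun y => Gegenbauer lam n y) (gderiv lam n x) x := by
  have hfun : (fun y => Gegenbauer lam n y)
      = fun y => ∑ k ∈ Finset.range (n / 2 + 1), gcoef lam n k * (2 * y) ^ (n - 2 * k) := rfl
  rw [hfun, gderiv]
  apply HasDerivAt.fun_sum
  intro k _
  have h2 : HasDerivAt (fun y : ℝ => 2 * y) 2 x := by
    simpa using (hasDerivAt_id x).const_mul (2 : ℝ)
  have h3 := ((hasDerivAt_pow (n - 2 * k) (2 * x)).comp x h2).const_mul (gcoef lam n k)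
  exact h3


private theorem c0 (ν : ℝ) (hν : 0 < ν) (n : ℕ) :
    ((n : ℝ) + 1) * (((n : ℝ) + 2 * ν + 1) / (2 * ν)) * gcoef ν (n + 1) 0
      = gcoef (ν + 1) n 0 * ((2 * ν + 1 + ((n : ℕ) : ℝ)) / 2) := by
  have hΓν : Real.Gamma ν ≠ 0 := (Real.Gamma_pos_of_pos hν).ne'
  simp only [gcoef]
  have g1 : Real.Gamma (((n + 1 : ℕ) : ℝ) - ((0 : ℕ) : ℝ) + ν)
      = Real.Gamma ((n : ℝ) + 1 + ν) := by
    congr 1; push_cast; ring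
  have g2 : Real.Gamma (((n : ℕ) : ℝ) - ((0 : ℕ) : ℝ) + (ν + 1))
      = Real.Gamma ((n : ℝ) + 1 + ν) := by
    congr 1; push_cast; ring
  have f1 : n + 1 - 2 * 0 = n + 1 := by omega
  have f2 : n - 2 * 0 = n := by omega
  rw [g1, g2, f1, f2, Real.Gamma_add_one hν.ne']
  have hfn : ((Nat.factorial n : ℕ) : ℝ) ≠ 0 := Nat.cast_ne_zero.mpr (Nat.factorial_ne_zero n)
  simp only [Nat.factorial_succ, Nat.factorial_zero, pow_zero]
  push_cast
  field_simp
  ring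

private theorem cmid (ν : ℝ) (hν : 0 < ν) (k d n : ℕ) (hn : n = 2 * k + d + 2) :
    ((n : ℝ) + 1) * (((n : ℝ) + 2 * ν + 1) / (2 * ν)) * gcoef ν (n + 1) (k + 1)
      = gcoef (ν + 1) n (k + 1) * ((2 * ν + 1 + (d : ℝ)) / 2)
        + (-2) * ((d : ℝ) + 2) * gcoef (ν + 1) n k := by
  subst hn
  have hΓν : Real.Gamma ν ≠ 0 := (Real.Gamma_pos_of_pos hν).ne'
  have hy : (0 : ℝ) < (k : ℝ) + (d : ℝ) + 2 + ν := by positivity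
  simp only [gcoef]
  have g1 : Real.Gamma (((2 * k + d + 2 + 1 : ℕ) : ℝ) - ((k + 1 : ℕ) : ℝ) + ν)
      = Real.Gamma ((k : ℝ) + (d : ℝ) + 2 + ν) := by congr 1; push_cast; ring
  have g2 : Real.Gamma (((2 * k + d + 2 : ℕ) : ℝ) - ((k + 1 : ℕ) : ℝ) + (ν + 1))
      = Real.Gamma ((k : ℝ) + (d : ℝ) + 2 + ν) := by congr 1; push_cast; ring
  have g3 : Real.Gamma (((2 * k + d + 2 : ℕ) : ℝ) - ((k : ℕ) : ℝ) + (ν + 1))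
      = ((k : ℝ) + (d : ℝ) + 2 + ν) * Real.Gamma ((k : ℝ) + (d : ℝ) + 2 + ν) := by
    rw [show ((2 * k + d + 2 : ℕ) : ℝ) - ((k : ℕ) : ℝ) + (ν + 1)
        = ((k : ℝ) + (d : ℝ) + 2 + ν) + 1 by push_cast; ring]
    exact Real.Gamma_add_one hy.ne'
  have f1 : 2 * k + d + 2 + 1 - 2 * (k + 1) = d + 1 := by omega
  have f2 : 2 * k + d + 2 - 2 * (k + 1) = d := by omega
  have f3 : 2 * k + d + 2 - 2 * k = d + 2 := by omega
  rw [g1, g2, g3, f1, f2, f3, Real.Gamma_add_one hν.ne']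
  have hfk : ((Nat.factorial k : ℕ) : ℝ) ≠ 0 := Nat.cast_ne_zero.mpr (Nat.factorial_ne_zero k)
  have hfd : ((Nat.factorial d : ℕ) : ℝ) ≠ 0 := Nat.cast_ne_zero.mpr (Nat.factorial_ne_zero d)
  have hΓy : Real.Gamma ((k : ℝ) + (d : ℝ) + 2 + ν) ≠ 0 := (Real.Gamma_pos_of_pos hy).ne'
  simp only [Nat.factorial_succ, pow_succ]
  push_cast
  field_simp
  ring

private theorem ctop (ν : ℝ) (hν : 0 < ν) (m : ℕ) :
    (((2 * m + 1 : ℕ) : ℝ) + 1) * ((((2 * m + 1 : ℕ) : ℝ) + 2 * ν + 1) / (2 * ν))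
        * gcoef ν (2 * m + 1 + 1) (m + 1)
      = (-2) * gcoef (ν + 1) (2 * m + 1) m := by
  have hΓν : Real.Gamma ν ≠ 0 := (Real.Gamma_pos_of_pos hν).ne'
  have hy : (0 : ℝ) < (m : ℝ) + 1 + ν := by positivity
  simp only [gcoef]
  have g1 : Real.Gamma (((2 * m + 1 + 1 : ℕ) : ℝ) - ((m + 1 : ℕ) : ℝ) + ν)
      = Real.Gamma ((m : ℝ) + 1 + ν) := by congr 1; push_cast; ring
  have g2 : Real.Gamma (((2 * m + 1 : ℕ) : ℝ) - ((m : ℕ) : ℝ) + (ν + 1))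
      = ((m : ℝ) + 1 + ν) * Real.Gamma ((m : ℝ) + 1 + ν) := by
    rw [show ((2 * m + 1 : ℕ) : ℝ) - ((m : ℕ) : ℝ) + (ν + 1)
        = ((m : ℝ) + 1 + ν) + 1 by push_cast; ring]
    exact Real.Gamma_add_one hy.ne'
  have f1 : 2 * m + 1 + 1 - 2 * (m + 1) = 0 := by omega
  have f2 : 2 * m + 1 - 2 * m = 1 := by omega
  rw [g1, g2, f1, f2, Real.Gamma_add_one hν.ne']
  have hfm : ((Nat.factorial m : ℕ) : ℝ) ≠ 0 := Nat.cast_ne_zero.mpr (Nat.factorial_ne_zero m)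
  have hΓy : Real.Gamma ((m : ℝ) + 1 + ν) ≠ 0 := (Real.Gamma_pos_of_pos hy).ne'
  simp only [Nat.factorial_succ, Nat.factorial_zero, Nat.factorial_one, pow_succ]
  push_cast
  field_simp
  ring


private theorem Lsplit (ν x A : ℝ) (n k : ℕ) (hk : 2 * k ≤ n) :
    (2 * ν + 1) * x * (A * (2 * x) ^ (n - 2 * k))
        - (1 - x ^ 2) * (A * (((n - 2 * k : ℕ) : ℝ) * (2 * x) ^ (n - 2 * k - 1) * 2))
      = A * ((2 * ν + 1 + ((n - 2 * k : ℕ) : ℝ)) / 2) * (2 * x) ^ (n + 1 - 2 * k)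
        + (-2) * ((n - 2 * k : ℕ) : ℝ) * A * (2 * x) ^ (n - 2 * k - 1) := by
  obtain ⟨d, rfl⟩ : ∃ d, n = 2 * k + d := ⟨n - 2 * k, by omega⟩
  have h1 : 2 * k + d - 2 * k = d := by omega
  have h2 : 2 * k + d + 1 - 2 * k = d + 1 := by omega
  rw [h1, h2]
  rcases d with _ | e
  · norm_num; ring
  · have h3 : e + 1 - 1 = e := rfl
    rw [h3]
    push_cast
    ring

private theorem combine (m : ℕ) (S1 S2 R : ℕ → ℝ)
    (h0 : R 0 = S1 0) (hmid : ∀ j < m, R (j + 1) = S1 (j + 1) + S2 j) (htop : S2 m = 0) :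
    (∑ k ∈ Finset.range (m + 1), S1 k) + (∑ k ∈ Finset.range (m + 1), S2 k)
      = ∑ j ∈ Finset.range (m + 1), R j := by
  rw [Finset.sum_range_succ' R, Finset.sum_range_succ' S1, Finset.sum_range_succ S2, htop, h0,
    Finset.sum_congr rfl (fun j hj => hmid j (Finset.mem_range.mp hj)),
    Finset.sum_add_distrib]
  ring

private theorem combine' (m : ℕ) (S1 S2 R : ℕ → ℝ)
    (h0 : R 0 = S1 0) (hmid : ∀ j < m, R (j + 1) = S1 (j + 1) + S2 j) (htop : R (m + 1) = S2 m) :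
    (∑ k ∈ Finset.range (m + 1), S1 k) + (∑ k ∈ Finset.range (m + 1), S2 k)
      = ∑ j ∈ Finset.range (m + 2), R j := by
  rw [Finset.sum_range_succ R (m + 1), htop, Finset.sum_range_succ' R,
    Finset.sum_range_succ' S1, Finset.sum_range_succ S2, h0,
    Finset.sum_congr rfl (fun j hj => hmid j (Finset.mem_range.mp hj)),
    Finset.sum_add_distrib]
  ring


private theorem keyEven (ν : ℝ) (hν : 0 < ν) (m : ℕ) (x : ℝ) :
    (2 * ν + 1) * x * Gegenbauer (ν + 1) (2 * m) x - (1 - x ^ 2) * gderiv (ν + 1) (2 * m) x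
      = (((2 * m : ℕ) : ℝ) + 1) * ((((2 * m : ℕ) : ℝ) + 2 * ν + 1) / (2 * ν))
          * Gegenbauer ν (2 * m + 1) x := by
  rw [Gegenbauer_eq, Gegenbauer_eq]
  simp only [gderiv]
  rw [show 2 * m / 2 + 1 = m + 1 from by omega, show (2 * m + 1) / 2 + 1 = m + 1 from by omega]
  rw [Finset.mul_sum, Finset.mul_sum, Finset.mul_sum, ← Finset.sum_sub_distrib]
  rw [Finset.sum_congr rfl (fun k hk => Lsplit ν x (gcoef (ν + 1) (2 * m) k) (2 * m) k
    (by have := Finset.mem_range.mp hk; omega))]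
  rw [Finset.sum_add_distrib]
  refine combine m _ _ _ ?_ ?_ ?_
  · -- R 0 = S1 0
    rw [show 2 * m + 1 - 2 * 0 = 2 * m + 1 from by omega, show 2 * m - 2 * 0 = 2 * m from by omega]
    linear_combination (2 * x) ^ (2 * m + 1) * c0 ν hν (2 * m)
  · -- mid terms
    intro j hj
    obtain ⟨d, hd⟩ : ∃ d, 2 * m = 2 * j + d + 2 := ⟨2 * m - 2 * j - 2, by omega⟩
    rw [show 2 * m - 2 * (j + 1) = d from by omega, show 2 * m - 2 * j = d + 2 from by omega,
      show 2 * m + 1 - 2 * (j + 1) = d + 1 from by omega,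
      show d + 2 - 1 = d + 1 from by omega]
    have h := cmid ν hν j d (2 * m) (by omega)
    push_cast at h ⊢
    linear_combination (2 * x) ^ (d + 1) * h
  · -- top S2 term vanishes
    rw [show 2 * m - 2 * m = 0 from by omega]
    norm_num

private theorem keyOdd (ν : ℝ) (hν : 0 < ν) (m : ℕ) (x : ℝ) :
    (2 * ν + 1) * x * Gegenbauer (ν + 1) (2 * m + 1) x
        - (1 - x ^ 2) * gderiv (ν + 1) (2 * m + 1) x
      = (((2 * m + 1 : ℕ) : ℝ) + 1) * ((((2 * m + 1 : ℕ) : ℝ) + 2 * ν + 1) / (2 * ν))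
          * Gegenbauer ν (2 * m + 1 + 1) x := by
  rw [Gegenbauer_eq, Gegenbauer_eq]
  simp only [gderiv]
  rw [show (2 * m + 1) / 2 + 1 = m + 1 from by omega,
    show (2 * m + 1 + 1) / 2 + 1 = m + 2 from by omega]
  rw [Finset.mul_sum, Finset.mul_sum, Finset.mul_sum, ← Finset.sum_sub_distrib]
  rw [Finset.sum_congr rfl (fun k hk => Lsplit ν x (gcoef (ν + 1) (2 * m + 1) k) (2 * m + 1) k
    (by have := Finset.mem_range.mp hk; omega))]
  rw [Finset.sum_add_distrib]
  refine combine' m _ _ _ ?_ ?_ ?_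
  · -- R 0 = S1 0
    rw [show 2 * m + 1 + 1 - 2 * 0 = 2 * m + 1 + 1 from by omega,
      show 2 * m + 1 - 2 * 0 = 2 * m + 1 from by omega]
    linear_combination (2 * x) ^ (2 * m + 1 + 1) * c0 ν hν (2 * m + 1)
  · -- mid terms
    intro j hj
    obtain ⟨d, hd⟩ : ∃ d, 2 * m + 1 = 2 * j + d + 2 := ⟨2 * m + 1 - 2 * j - 2, by omega⟩
    rw [show 2 * m + 1 - 2 * (j + 1) = d from by omega,
      show 2 * m + 1 - 2 * j = d + 2 from by omega,
      show 2 * m + 1 + 1 - 2 * (j + 1) = d + 1 from by omega,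
      show d + 2 - 1 = d + 1 from by omega]
    have h := cmid ν hν j d (2 * m + 1) (by omega)
    push_cast at h ⊢
    linear_combination (2 * x) ^ (d + 1) * h
  · -- top term
    rw [show 2 * m + 1 + 1 - 2 * (m + 1) = 0 from by omega,
      show 2 * m + 1 - 2 * m = 1 from by omega,
      show 1 - 1 = 0 from by omega]
    have h := ctop ν hν m
    push_cast at h ⊢
    linear_combination h

private theorem key (ν : ℝ) (hν : 0 < ν) (n : ℕ) (x : ℝ) :
    (2 * ν + 1) * x * Gegenbauer (ν + 1) n x - (1 - x ^ 2) * gderiv (ν + 1) n x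
      = ((n : ℝ) + 1) * (((n : ℝ) + 2 * ν + 1) / (2 * ν)) * Gegenbauer ν (n + 1) x := by
  rcases Nat.even_or_odd n with ⟨m, hm⟩ | ⟨m, hm⟩
  · have hm' : n = 2 * m := by omega
    subst hm'
    exact keyEven ν hν m x
  · have hm' : n = 2 * m + 1 := by omega
    subst hm'
    exact keyOdd ν hν m x

end Stmt8Aux

/-- derivative of `(1+x)^{λ+1}(1−x)^λ C_n^{λ+1/2}(x)`. -/
theorem stmt8 (lam : ℝ) (hlam : 1 / 2 < lam) (n : ℕ) (x : ℝ) (hx : x ∈ Set.Ioo (-1 : ℝ) 1) :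
    deriv (fun y : ℝ => (1 + y) ^ (lam + 1) * (1 - y) ^ lam * Gegenbauer (lam + 1 / 2) n y) x =
      (1 + x) * (1 - x ^ 2) ^ (lam - 1) *
        ((1 - x) * Gegenbauer (lam + 1 / 2) n x -
          ((n : ℝ) + 1) * ((2 * lam + (n : ℝ)) / (2 * lam - 1)) * Gegenbauer (lam - 1 / 2) (n + 1) x) := by
  obtain ⟨hx1, hx2⟩ := hx
  have h1p : (0 : ℝ) < 1 + x := by linarith
  have h1m : (0 : ℝ) < 1 - x := by linarith
  have hd1 : HasDerivAt (fun y : ℝ => (1 + y) ^ (lam + 1)) ((lam + 1) * (1 + x) ^ lam * 1) x := by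
    have h2 : HasDerivAt (fun y : ℝ => 1 + y) 1 x := by
      simpa using (hasDerivAt_id x).const_add (1 : ℝ)
    have h3 := (Real.hasDerivAt_rpow_const (x := 1 + x) (p := lam + 1)
      (Or.inl h1p.ne')).comp x h2
    simpa [Function.comp_def] using h3
  have hd2 : HasDerivAt (fun y : ℝ => (1 - y) ^ lam) (lam * (1 - x) ^ (lam - 1) * (-1)) x := by
    have h2 : HasDerivAt (fun y : ℝ => 1 - y) (-1) x := by
      simpa using (hasDerivAt_id x).const_sub (1 : ℝ)
    exact (Real.hasDerivAt_rpow_const (x := 1 - x) (p := lam) (Or.inl h1m.ne')).comp x h2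
  have hd3 := hasDerivAt_geg (lam + 1 / 2) n x
  have htot : HasDerivAt
      (fun y : ℝ => (1 + y) ^ (lam + 1) * (1 - y) ^ lam * Gegenbauer (lam + 1 / 2) n y)
      (((lam + 1) * (1 + x) ^ lam * 1 * (1 - x) ^ lam
          + (1 + x) ^ (lam + 1) * (lam * (1 - x) ^ (lam - 1) * (-1)))
            * Gegenbauer (lam + 1 / 2) n x
        + (1 + x) ^ (lam + 1) * (1 - x) ^ lam * gderiv (lam + 1 / 2) n x) x :=
    (hd1.mul hd2).mul hd3
  rw [htot.deriv]
  have hν : (0 : ℝ) < lam - 1 / 2 := by linarith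
  have hkey := key (lam - 1 / 2) hν n x
  rw [show lam - 1 / 2 + 1 = lam + 1 / 2 from by ring] at hkey
  have e1 : (1 + x) ^ (lam + 1) = (1 + x) ^ (lam - 1) * (1 + x) * (1 + x) := by
    rw [← Real.rpow_add_one h1p.ne' (lam - 1), ← Real.rpow_add_one h1p.ne']
    congr 1
    ring
  have e2 : (1 + x) ^ lam = (1 + x) ^ (lam - 1) * (1 + x) := by
    rw [← Real.rpow_add_one h1p.ne' (lam - 1)]
    congr 1
    ring
  have e3 : (1 - x) ^ lam = (1 - x) ^ (lam - 1) * (1 - x) := by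
    rw [← Real.rpow_add_one h1m.ne' (lam - 1)]
    congr 1
    ring
  have e4 : (1 - x ^ 2) ^ (lam - 1) = (1 + x) ^ (lam - 1) * (1 - x) ^ (lam - 1) := by
    rw [show (1 : ℝ) - x ^ 2 = (1 + x) * (1 - x) from by ring,
      Real.mul_rpow h1p.le h1m.le]
  rw [e1, e2, e3, e4]
  have h2l : (2 : ℝ) * lam - 1 ≠ 0 := by linarith
  have hkey2 : 2 * lam * x * Gegenbauer (lam + 1 / 2) n x
      - (1 - x ^ 2) * gderiv (lam + 1 / 2) n x
      = ((n : ℝ) + 1) * ((2 * lam + (n : ℝ)) / (2 * lam - 1))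
          * Gegenbauer (lam - 1 / 2) (n + 1) x := by
    have hdiv : ((n : ℝ) + 2 * (lam - 1 / 2) + 1) / (2 * (lam - 1 / 2))
        = (2 * lam + (n : ℝ)) / (2 * lam - 1) := by
      rw [div_eq_div_iff (by linarith) (by linarith)]
      ring
    rw [hdiv] at hkey
    linear_combination hkey
  linear_combination (-(1 + x) * ((1 + x) ^ (lam - 1)) * ((1 - x) ^ (lam - 1))) * hkey2
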